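/- If G is a connected graph of diameter 3 and H is a graph with at least one edge, then χ_ρ(G∘H) = |V(G)|·|V(H)| − α(G)·α(H) − ρ_2(G) + 2. -/

import Mathlib

open SimpleGraph

/-- The lexicographic product of simple graphs. -/
def SimpleGraph.lexProd {α β : Type*} (G : SimpleGraph α) (H : SimpleGraph β) :
    SimpleGraph (α × β) where
  Adj x y := G.Adj x.1 y.1 ∨ (x.1 = y.1 ∧ H.Adj x.2 y.2)
  symm := by
    constructor
    rintro ⟨g1, h1⟩ ⟨g2, h2⟩ (h | ⟨rfl, h⟩)
    · exact Or.inl h.symm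
    · exact Or.inr ⟨rfl, h.symm⟩
  loopless := by
    constructor
    rintro ⟨g, h⟩ (h' | ⟨-, h'⟩)
    · exact G.loopless.irrefl g h'
    · exact H.loopless.irrefl h h'

/-- A set of vertices is independent if its vertices are pairwise non-adjacent. -/
def SimpleGraph.IndepSet {α : Type*} (G : SimpleGraph α) (s : Set α) : Prop :=
  ∀ u ∈ s, ∀ v ∈ s, u ≠ v → ¬ G.Adj u v

/-- The independence number: the largest cardinality of an independent set. -/
noncomputable def SimpleGraph.indepNum' {α : Type*} [Fintype α] (G : SimpleGraph α) : ℕ :=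
  sSup {n | ∃ s : Finset α, G.IndepSet ↑s ∧ s.card = n}

/-- An `i`-packing: a set of vertices pairwise at distance greater than `i`. -/
def SimpleGraph.IsPacking {α : Type*} (G : SimpleGraph α) (i : ℕ) (s : Set α) : Prop :=
  ∀ u ∈ s, ∀ v ∈ s, u ≠ v → i < G.dist u v

/-- The `i`-packing number: the largest cardinality of an `i`-packing. -/
noncomputable def SimpleGraph.packingNum {α : Type*} [Fintype α] (G : SimpleGraph α)
    (i : ℕ) : ℕ :=
  sSup {n | ∃ s : Finset α, G.IsPacking i ↑s ∧ s.card = n}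

/-- A `k`-packing coloring: colors in `{1, …, k}`, and any two distinct vertices sharing
color `i` are at distance greater than `i`. -/
def SimpleGraph.IsPackingColoring {α : Type*} (G : SimpleGraph α) (k : ℕ) (c : α → ℕ) :
    Prop :=
  (∀ v, c v ∈ Finset.Icc 1 k) ∧ ∀ u v, u ≠ v → c u = c v → c u < G.dist u v

/-- The packing chromatic number: the least `k` admitting a `k`-packing coloring. -/
noncomputable def SimpleGraph.packingChromatic {α : Type*} (G : SimpleGraph α) : ℕ :=
  sInf {k | ∃ c : α → ℕ, G.IsPackingColoring k c}

/-- `d(G) = 1` if `G` is complete, and `diam(G) - 1` otherwise. -/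
noncomputable def SimpleGraph.dval {α : Type*} [Fintype α] (G : SimpleGraph α) : ℕ :=
  letI := Classical.dec (G = (⊤ : SimpleGraph α))
  if G = (⊤ : SimpleGraph α) then 1 else G.diam - 1

section Aux

open SimpleGraph Finset

variable {α β : Type*}

namespace SimpleGraph

/-- Every vertex of a connected graph on more than one vertex has a neighbor. -/
lemma exists_adj_of_connected (G : SimpleGraph α) (hG : G.Connected)
    (hc : Nontrivial α) (g : α) : ∃ g', G.Adj g g' := by
  haveI := hc
  obtain ⟨g'', hne⟩ := exists_ne g
  obtain ⟨w⟩ := hG g g''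
  cases w with
  | nil => exact absurd rfl (Ne.symm hne)
  | cons a _ => exact ⟨_, a⟩

/-- Lift a positive-length walk in `G` to a walk in the lexicographic product. -/
lemma lexProd_lift_walk (G : SimpleGraph α) (H : SimpleGraph β) {g g' : α}
    (p : G.Walk g g') (hp : 0 < p.length) (h h' : β) :
    ∃ w : (G.lexProd H).Walk (g, h) (g', h'), w.length ≤ p.length := by
  induction p with
  | nil => simp at hp
  | @cons u x v a q ih =>
    by_cases hq : q.length = 0
    · obtain rfl : x = v := SimpleGraph.Walk.eq_of_length_eq_zero hq
      exact ⟨SimpleGraph.Walk.cons (Or.inl a) SimpleGraph.Walk.nil, by show 0 + 1 ≤ q.length + 1; omega⟩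
    · obtain ⟨w, hw⟩ := ih (Nat.pos_of_ne_zero hq)
      exact ⟨SimpleGraph.Walk.cons (Or.inl a) w, by show w.length + 1 ≤ q.length + 1; omega⟩

lemma lexProd_fiber_dist_le_two (G : SimpleGraph α) (H : SimpleGraph β)
    (hG : G.Connected) (hc : Nontrivial α) (g : α) (h h' : β) :
    (G.lexProd H).dist (g, h) (g, h') ≤ 2 := by
  obtain ⟨g₂, hadj⟩ := G.exists_adj_of_connected hG hc g
  refine le_trans (SimpleGraph.dist_le (SimpleGraph.Walk.cons (v := (g₂, h)) (Or.inl hadj)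
      (SimpleGraph.Walk.cons (Or.inl hadj.symm) SimpleGraph.Walk.nil))) (by show 0 + 1 + 1 ≤ 2; omega)

lemma lexProd_dist_le_dist_fst (G : SimpleGraph α) (H : SimpleGraph β)
    (hG : G.Connected) {g g' : α} (hne : g ≠ g') (h h' : β) :
    (G.lexProd H).dist (g, h) (g', h') ≤ G.dist g g' := by
  obtain ⟨p, hp⟩ := (hG g g').exists_walk_length_eq_dist
  have hpos : 0 < p.length := by
    rw [hp]; exact hG.pos_dist_of_ne hne
  obtain ⟨w, hw⟩ := G.lexProd_lift_walk H p hpos h h'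
  exact le_trans (SimpleGraph.dist_le w) (hp ▸ hw)

lemma lexProd_connected (G : SimpleGraph α) (H : SimpleGraph β)
    (hG : G.Connected) (hc : Nontrivial α) [Nonempty β] :
    (G.lexProd H).Connected := by
  haveI : Nonempty α := hG.nonempty
  constructor
  rintro ⟨g, h⟩ ⟨g', h'⟩
  by_cases hg : g = g'
  · subst hg
    obtain ⟨g₂, hadj⟩ := G.exists_adj_of_connected hG hc g
    exact ⟨SimpleGraph.Walk.cons (v := (g₂, h)) (Or.inl hadj)
      (SimpleGraph.Walk.cons (Or.inl hadj.symm) SimpleGraph.Walk.nil)⟩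
  · obtain ⟨p, hp⟩ := (hG g g').exists_walk_length_eq_dist
    have hpos : 0 < p.length := by rw [hp]; exact hG.pos_dist_of_ne hg
    obtain ⟨w, _⟩ := G.lexProd_lift_walk H p hpos h h'
    exact ⟨w⟩

lemma dist_fst_le_lexProd_walk (G : SimpleGraph α) (H : SimpleGraph β)
    (hG : G.Connected) {u v : α × β} (w : (G.lexProd H).Walk u v) :
    G.dist u.1 v.1 ≤ w.length := by
  induction w with
  | nil => simp
  | @cons x y z a q ih =>
    rcases a with hadj | ⟨heq, -⟩
    · calc G.dist x.1 z.1 ≤ G.dist x.1 y.1 + G.dist y.1 z.1 := hG.dist_triangle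
        _ ≤ 1 + q.length := by
            have : G.dist x.1 y.1 = 1 := (SimpleGraph.dist_eq_one_iff_adj).mpr hadj
            omega
        _ = q.length + 1 := by omega
        _ = (SimpleGraph.Walk.cons (Or.inl hadj) q).length := rfl
    · show G.dist x.1 z.1 ≤ q.length + 1
      rw [heq]
      omega

lemma dist_fst_le_lexProd (G : SimpleGraph α) (H : SimpleGraph β)
    (hG : G.Connected) (hL : (G.lexProd H).Connected) (u v : α × β) :
    G.dist u.1 v.1 ≤ (G.lexProd H).dist u v := by
  obtain ⟨w, hw⟩ := (hL u v).exists_walk_length_eq_dist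
  exact hw ▸ G.dist_fst_le_lexProd_walk H hG w

end SimpleGraph

end Aux

section Aux2

open Finset

namespace SimpleGraph

variable {α β : Type*} [Fintype α] [Fintype β]

lemma indepNum_bddAbove (G : SimpleGraph α) :
    BddAbove {n | ∃ s : Finset α, G.IndepSet ↑s ∧ s.card = n} :=
  ⟨Fintype.card α, by rintro n ⟨s, -, rfl⟩; exact s.card_le_univ⟩

lemma card_le_indepNum (G : SimpleGraph α) {s : Finset α} (hs : G.IndepSet ↑s) :
    s.card ≤ G.indepNum' :=
  le_csSup G.indepNum_bddAbove ⟨s, hs, rfl⟩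

lemma exists_indepNum (G : SimpleGraph α) :
    ∃ s : Finset α, G.IndepSet ↑s ∧ s.card = G.indepNum' := by
  have hne : {n : ℕ | ∃ s : Finset α, G.IndepSet ↑s ∧ s.card = n}.Nonempty :=
    ⟨0, Set.mem_setOf.mpr ⟨∅, by simp [SimpleGraph.IndepSet], rfl⟩⟩
  exact Nat.sSup_mem hne G.indepNum_bddAbove

lemma packingNum_bddAbove (G : SimpleGraph α) (i : ℕ) :
    BddAbove {n | ∃ s : Finset α, G.IsPacking i ↑s ∧ s.card = n} :=
  ⟨Fintype.card α, by rintro n ⟨s, -, rfl⟩; exact s.card_le_univ⟩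

lemma card_le_packingNum (G : SimpleGraph α) (i : ℕ) {s : Finset α}
    (hs : G.IsPacking i ↑s) : s.card ≤ G.packingNum i :=
  le_csSup (G.packingNum_bddAbove i) ⟨s, hs, rfl⟩

lemma exists_packingNum (G : SimpleGraph α) (i : ℕ) :
    ∃ s : Finset α, G.IsPacking i ↑s ∧ s.card = G.packingNum i := by
  have hne : {n : ℕ | ∃ s : Finset α, G.IsPacking i ↑s ∧ s.card = n}.Nonempty :=
    ⟨0, Set.mem_setOf.mpr ⟨∅, by simp [SimpleGraph.IsPacking], rfl⟩⟩
  exact Nat.sSup_mem hne (G.packingNum_bddAbove i)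

/-- An independent set in the lexicographic product has at most `α(G)·α(H)` vertices. -/
lemma lexProd_indep_card_le (G : SimpleGraph α) (H : SimpleGraph β)
    {s : Finset (α × β)} (hs : (G.lexProd H).IndepSet ↑s) :
    s.card ≤ G.indepNum' * H.indepNum' := by
  classical
  set T : Finset α := s.image Prod.fst with hT
  have hTcard : T.card ≤ G.indepNum' := by
    refine G.card_le_indepNum ?_
    intro g hg g' hg' hne hadj
    simp only [hT, coe_image, Set.mem_image, mem_coe] at hg hg'
    obtain ⟨u, hu, rfl⟩ := hg
    obtain ⟨v, hv, rfl⟩ := hg'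
    exact hs u hu v hv (fun h => hne (by rw [h])) (Or.inl hadj)
  have hsum : s.card = ∑ g ∈ T, (s.filter (fun u => u.1 = g)).card :=
    Finset.card_eq_sum_card_fiberwise fun u hu => mem_image_of_mem _ hu
  have hfiber : ∀ g ∈ T, (s.filter (fun u => u.1 = g)).card ≤ H.indepNum' := by
    intro g _
    have hinj : Set.InjOn Prod.snd ((s.filter (fun u => u.1 = g) : Finset (α × β)) : Set (α × β)) := by
      intro u hu v hv h2
      simp only [coe_filter, Set.mem_setOf_eq] at hu hv
      exact Prod.ext (hu.2.trans hv.2.symm) h2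
    rw [← Finset.card_image_of_injOn hinj]
    refine H.card_le_indepNum ?_
    intro h hh h' hh' hne hadj
    simp only [coe_image, coe_filter, Set.mem_image, Set.mem_setOf_eq] at hh hh'
    obtain ⟨u, ⟨hu, hu1⟩, rfl⟩ := hh
    obtain ⟨v, ⟨hv, hv1⟩, rfl⟩ := hh'
    refine hs u hu v hv (fun h => hne (by rw [h])) (Or.inr ⟨hu1.trans hv1.symm, hadj⟩)
  calc s.card = ∑ g ∈ T, (s.filter (fun u => u.1 = g)).card := hsum
    _ ≤ ∑ _g ∈ T, H.indepNum' := Finset.sum_le_sum hfiber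
    _ = T.card * H.indepNum' := by rw [Finset.sum_const, smul_eq_mul]
    _ ≤ G.indepNum' * H.indepNum' := Nat.mul_le_mul_right _ hTcard

end SimpleGraph

end Aux2

theorem packingChromatic_lexProd_diam_three {α β : Type*} [Fintype α] [Fintype β]
    (G : SimpleGraph α) (H : SimpleGraph β)
    (hG : G.Connected) (hd : G.diam = 3) (hH : H ≠ ⊥) :
    (((G.lexProd H).packingChromatic : ℤ)) =
      (Fintype.card α * Fintype.card β : ℤ) - (G.indepNum' : ℤ) * (H.indepNum' : ℤ)
        - (G.packingNum 2 : ℤ) + 2 := by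
  classical
  haveI : Nonempty α := hG.nonempty
  obtain ⟨hp1, hp2, hadjH⟩ : ∃ h1 h2 : β, H.Adj h1 h2 := by
    by_contra hcon
    push_neg at hcon
    exact hH (by ext x y; simp only [SimpleGraph.bot_adj, iff_false]; exact hcon x y)
  haveI : Nonempty β := ⟨hp1⟩
  have hnt : Nontrivial α := by
    obtain ⟨u, v, huv⟩ := SimpleGraph.exists_dist_eq_diam (G := G)
    refine ⟨u, v, fun h => ?_⟩
    rw [h, SimpleGraph.dist_self, hd] at huv
    omega
  have hL : (G.lexProd H).Connected := G.lexProd_connected H hG hnt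
  -- distances in the product are at most 3
  have hdle3 : ∀ u v : α × β, (G.lexProd H).dist u v ≤ 3 := by
    intro u v
    by_cases h1 : u.1 = v.1
    · have hle := G.lexProd_fiber_dist_le_two H hG hnt u.1 u.2 v.2
      have heq : ((u.1, v.2) : α × β) = v := Prod.ext h1 rfl
      simp only [Prod.mk.eta] at hle
      rw [heq] at hle
      omega
    · have hle := G.lexProd_dist_le_dist_fst H hG h1 u.2 v.2
      simp only [Prod.mk.eta] at hle
      have hdd : G.dist u.1 v.1 ≤ G.diam :=
        SimpleGraph.dist_le_diam
          (SimpleGraph.ediam_ne_top_of_diam_ne_zero (by rw [hd]; omega))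
      omega
  -- extremal sets
  obtain ⟨I, hI, hIcard⟩ := G.exists_indepNum
  obtain ⟨J, hJ, hJcard⟩ := H.exists_indepNum
  obtain ⟨S, hS, hScard⟩ := G.exists_packingNum 2
  obtain ⟨h₀, hh₀⟩ : ∃ h₀ : β, h₀ ∉ J := by
    by_contra hcon
    push_neg at hcon
    exact hJ hp1 (Finset.mem_coe.mpr (hcon hp1)) hp2 (Finset.mem_coe.mpr (hcon hp2))
      hadjH.ne hadjH
  set A : Finset (α × β) := I ×ˢ J with hAdef
  set B : Finset (α × β) := S.image (fun g => (g, h₀)) with hBdef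
  have hdisj : Disjoint A B := by
    rw [Finset.disjoint_left]
    rintro ⟨g, h⟩ hA hB
    rw [hBdef, Finset.mem_image] at hB
    obtain ⟨g', _, heq⟩ := hB
    rw [hAdef, Finset.mem_product] at hA
    have h2 : h₀ = h := (Prod.ext_iff.mp heq).2
    subst h2
    exact hh₀ hA.2
  have hAcard : A.card = G.indepNum' * H.indepNum' := by
    rw [hAdef, Finset.card_product, hIcard, hJcard]
  have hBcard : B.card = G.packingNum 2 := by
    rw [hBdef, Finset.card_image_of_injective _ (fun a b hab => (Prod.ext_iff.mp hab).1),
      hScard]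
  set N : ℕ := Fintype.card α * Fintype.card β with hNdef
  have hNuniv : (Finset.univ : Finset (α × β)).card = N := by
    rw [Finset.card_univ, Fintype.card_prod]
  have hub : G.indepNum' * H.indepNum' + G.packingNum 2 ≤ N := by
    have h1 := Finset.card_le_univ (A ∪ B)
    rw [Finset.card_union_of_disjoint hdisj, hAcard, hBcard] at h1
    have h2 := Fintype.card_prod α β
    omega
  set R : Finset (α × β) := Finset.univ \ (A ∪ B) with hRdef
  have hRcard : R.card = N - (G.indepNum' * H.indepNum' + G.packingNum 2) := by
    rw [hRdef, Finset.card_sdiff_of_subset (Finset.subset_univ _),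
      Finset.card_union_of_disjoint hdisj, hAcard, hBcard, hNuniv]
  set k₀ : ℕ := N - (G.indepNum' * H.indepNum' + G.packingNum 2) + 2 with hk₀def
  have hnotR : ∀ u : α × β, u ∉ R → u ∈ A ∨ u ∈ B := by
    intro u hu
    by_contra hcon
    push_neg at hcon
    refine hu ?_
    rw [hRdef, Finset.mem_sdiff]
    exact ⟨Finset.mem_univ u, fun h => (Finset.mem_union.mp h).elim hcon.1 hcon.2⟩
  have hRA : ∀ u : α × β, u ∈ R → u ∉ A := by
    intro u hu
    rw [hRdef, Finset.mem_sdiff] at hu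
    exact fun h => hu.2 (Finset.mem_union_left _ h)
  have hRB : ∀ u : α × β, u ∈ R → u ∉ B := by
    intro u hu
    rw [hRdef, Finset.mem_sdiff] at hu
    exact fun h => hu.2 (Finset.mem_union_right _ h)
  set c : (α × β) → ℕ := fun u =>
    if hu : u ∈ R then ((R.equivFin ⟨u, hu⟩ : Fin R.card) : ℕ) + 3
    else if u ∈ A then 1 else 2 with hcdef
  have hcR : ∀ u (hu : u ∈ R), c u = ((R.equivFin ⟨u, hu⟩ : Fin R.card) : ℕ) + 3 := by
    intro u hu
    rw [hcdef]
    simp only [dif_pos hu]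
  have hcA : ∀ u ∈ A, c u = 1 := by
    intro u hu
    have hnR : u ∉ R := by
      rw [hRdef, Finset.mem_sdiff]
      push_neg
      exact fun _ => Finset.mem_union_left _ hu
    rw [hcdef]
    simp only [dif_neg hnR, if_pos hu]
  have hcB : ∀ u ∈ B, c u = 2 := by
    intro u hu
    have hnR : u ∉ R := by
      rw [hRdef, Finset.mem_sdiff]
      push_neg
      exact fun _ => Finset.mem_union_right _ hu
    have hnA : u ∉ A := fun h => (Finset.disjoint_left.mp hdisj) h hu
    rw [hcdef]
    simp only [dif_neg hnR, if_neg hnA]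
  -- the constructed coloring is a k₀-packing coloring
  have hmem : k₀ ∈ {k | ∃ c : (α × β) → ℕ, (G.lexProd H).IsPackingColoring k c} := by
    refine ⟨c, fun v => ?_, fun u v hne hceq => ?_⟩
    · rw [Finset.mem_Icc]
      by_cases hv : v ∈ R
      · rw [hcR v hv]
        have hlt : ((R.equivFin ⟨v, hv⟩ : Fin R.card) : ℕ) < R.card :=
          (R.equivFin ⟨v, hv⟩).isLt
        omega
      · rcases hnotR v hv with h | h
        · rw [hcA v h]; omega
        · rw [hcB v h]; omega
    · by_cases hu : u ∈ R <;> by_cases hv : v ∈ R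
      · exfalso
        rw [hcR u hu, hcR v hv] at hceq
        have : (⟨u, hu⟩ : {x // x ∈ R}) = ⟨v, hv⟩ :=
          R.equivFin.injective (Fin.ext (by omega))
        exact hne (congrArg Subtype.val this)
      · exfalso
        rw [hcR u hu] at hceq
        rcases hnotR v hv with h | h
        · rw [hcA v h] at hceq; omega
        · rw [hcB v h] at hceq; omega
      · exfalso
        rw [hcR v hv] at hceq
        rcases hnotR u hu with h | h
        · rw [hcA u h] at hceq; omega
        · rw [hcB u h] at hceq; omega
      · rcases hnotR u hu with hA1 | hB1 <;> rcases hnotR v hv with hA2 | hB2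
        · -- both in A : color 1
          have hd0 : 0 < (G.lexProd H).dist u v := hL.pos_dist_of_ne hne
          have hnadj : ¬ (G.lexProd H).Adj u v := by
            rw [hAdef, Finset.mem_product] at hA1 hA2
            rintro (hadj | ⟨heq, hadj⟩)
            · exact hI u.1 (Finset.mem_coe.mpr hA1.1) v.1 (Finset.mem_coe.mpr hA2.1)
                hadj.ne hadj
            · exact hJ u.2 (Finset.mem_coe.mpr hA1.2) v.2 (Finset.mem_coe.mpr hA2.2)
                (fun h2 => hne (Prod.ext heq h2)) hadj
          have hd1 : (G.lexProd H).dist u v ≠ 1 :=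
            fun h1 => hnadj (SimpleGraph.dist_eq_one_iff_adj.mp h1)
          rw [hcA u hA1]
          omega
        · exfalso; rw [hcA u hA1, hcB v hB2] at hceq; omega
        · exfalso; rw [hcB u hB1, hcA v hA2] at hceq; omega
        · -- both in B : color 2
          rw [hBdef, Finset.mem_image] at hB1 hB2
          obtain ⟨g, hgS, rfl⟩ := hB1
          obtain ⟨g', hg'S, rfl⟩ := hB2
          have hgg' : g ≠ g' := fun h => hne (by rw [h])
          have hpack := hS g (Finset.mem_coe.mpr hgS) g' (Finset.mem_coe.mpr hg'S) hgg'
          have hle := G.dist_fst_le_lexProd H hG hL (g, h₀) (g', h₀)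
          rw [hcB _ (Finset.mem_image_of_mem _ hgS)]
          simp only at hle
          omega
  -- every packing coloring needs at least k₀ colors
  have hlow : ∀ k ∈ {k : ℕ | ∃ c : (α × β) → ℕ, (G.lexProd H).IsPackingColoring k c},
      k₀ ≤ k := by
    rintro k ⟨c', hcr, hcp⟩
    obtain ⟨g₀⟩ := (inferInstance : Nonempty α)
    have hadjL : (G.lexProd H).Adj (g₀, hp1) (g₀, hp2) := Or.inr ⟨rfl, hadjH⟩
    have hd1 : (G.lexProd H).dist (g₀, hp1) (g₀, hp2) = 1 :=
      SimpleGraph.dist_eq_one_iff_adj.mpr hadjL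
    have hne12 : ((g₀, hp1) : α × β) ≠ (g₀, hp2) :=
      fun h => hadjH.ne (Prod.ext_iff.mp h).2
    have hk2 : 2 ≤ k := by
      by_contra hk
      push_neg at hk
      have m1 := Finset.mem_Icc.mp (hcr (g₀, hp1))
      have m2 := Finset.mem_Icc.mp (hcr (g₀, hp2))
      have hlt := hcp (g₀, hp1) (g₀, hp2) hne12 (by omega)
      omega
    have hsum := Finset.card_eq_sum_card_fiberwise
      (f := c') (s := (Finset.univ : Finset (α × β))) (t := Finset.Icc 1 k)
      (fun u _ => hcr u)
    have hIcc : Finset.Icc 1 k = insert 1 (insert 2 (Finset.Icc 3 k)) := by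
      ext i
      simp only [Finset.mem_Icc, Finset.mem_insert]
      omega
    rw [hIcc, Finset.sum_insert (by simp only [Finset.mem_insert, Finset.mem_Icc]; omega),
      Finset.sum_insert (by simp only [Finset.mem_Icc]; omega)] at hsum
    have hb1 : (Finset.univ.filter (fun u => c' u = 1)).card ≤
        G.indepNum' * H.indepNum' := by
      refine G.lexProd_indep_card_le H ?_
      intro u hu v hv hne hadj
      simp only [Finset.coe_filter, Set.mem_setOf_eq] at hu hv
      have hlt := hcp u v hne (hu.2.trans hv.2.symm)
      rw [hu.2, SimpleGraph.dist_eq_one_iff_adj.mpr hadj] at hlt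
      omega
    have hb2 : (Finset.univ.filter (fun u => c' u = 2)).card ≤ G.packingNum 2 := by
      set s2 := Finset.univ.filter (fun u => c' u = 2) with hs2
      have hdist : ∀ u ∈ s2, ∀ v ∈ s2, u ≠ v → 2 < (G.lexProd H).dist u v := by
        intro u hu v hv hne
        rw [hs2, Finset.mem_filter] at hu hv
        have hlt := hcp u v hne (hu.2.trans hv.2.symm)
        rw [hu.2] at hlt
        exact hlt
      have hfst : ∀ u ∈ s2, ∀ v ∈ s2, u ≠ v → u.1 ≠ v.1 := by
        intro u hu v hv hne h1
        have h2 := hdist u hu v hv hne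
        have hle := G.lexProd_fiber_dist_le_two H hG hnt u.1 u.2 v.2
        have heq : ((u.1, v.2) : α × β) = v := Prod.ext h1 rfl
        simp only [Prod.mk.eta] at hle
        rw [heq] at hle
        omega
      have hinj : Set.InjOn Prod.fst ((s2 : Finset (α × β)) : Set (α × β)) := by
        intro u hu v hv h1
        by_contra hne
        exact hfst u (Finset.mem_coe.mp hu) v (Finset.mem_coe.mp hv) hne h1
      rw [← Finset.card_image_of_injOn hinj]
      refine G.card_le_packingNum 2 ?_
      intro g hg g' hg' hne
      rw [Finset.coe_image] at hg hg'
      obtain ⟨u, hu, rfl⟩ := hg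
      obtain ⟨v, hv, rfl⟩ := hg'
      have hneuv : u ≠ v := fun h => hne (by rw [h])
      have h2 := hdist u (Finset.mem_coe.mp hu) v (Finset.mem_coe.mp hv) hneuv
      have hle := G.lexProd_dist_le_dist_fst H hG hne u.2 v.2
      simp only [Prod.mk.eta] at hle
      omega
    have hb3 : ∀ i ∈ Finset.Icc 3 k, (Finset.univ.filter (fun u => c' u = i)).card ≤ 1 := by
      intro i hi
      rw [Finset.card_le_one]
      intro u hu v hv
      by_contra hne
      rw [Finset.mem_filter] at hu hv
      have hlt := hcp u v hne (hu.2.trans hv.2.symm)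
      rw [hu.2] at hlt
      have h3 := hdle3 u v
      have hi3 := (Finset.mem_Icc.mp hi).1
      omega
    have hsum3 : ∑ i ∈ Finset.Icc 3 k, (Finset.univ.filter (fun u => c' u = i)).card ≤
        k - 2 := by
      calc ∑ i ∈ Finset.Icc 3 k, (Finset.univ.filter (fun u => c' u = i)).card
          ≤ ∑ _i ∈ Finset.Icc 3 k, 1 := Finset.sum_le_sum hb3
        _ = (Finset.Icc 3 k).card := by simp
        _ = k - 2 := by rw [Nat.card_Icc]; omega
    rw [hNuniv] at hsum
    omega
  have hchi : (G.lexProd H).packingChromatic = k₀ :=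
    le_antisymm (Nat.sInf_le hmem) (le_csInf ⟨k₀, hmem⟩ hlow)
  rw [hchi, hk₀def, hNdef]
  have hub' := hub
  rw [hNdef] at hub'
  push_cast [Nat.cast_sub hub']
  ring
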